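/- Let n ≥ 1, d ≥ 1, and let S, Q be finite subsets of (ℤ/nℤ)^d with |S| = |Q| = r. For x, y ∈ (ℤ/nℤ)^d write e(x·y) = exp(2πi·(x₁y₁ + ⋯ + x_d y_d)/n) (well defined via integer representatives). Suppose (S, Q) is a spectral pair, i.e. for all distinct q, q′ ∈ Q, ∑_{s ∈ S} e((q − q′)·s) = 0. Then for every x ∈ (ℤ/nℤ)^d: ∑_{q ∈ Q} |∑_{s ∈ S} e((x − q)·s)|² = r². In other words, the function |χ̂_S|² tiles (ℤ/nℤ)^d at level |S|² when translated along Q. -/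

import Mathlib

open Complex Finset

noncomputable def psiC (n : ℕ) (a : ZMod n) : ℂ :=
  Complex.exp (2 * (Real.pi : ℂ) * Complex.I * ((a.val : ℕ) : ℂ) / n)

lemma psiC_natCast (n : ℕ) [NeZero n] (k : ℕ) :
    psiC n (k : ZMod n) = Complex.exp (2 * (Real.pi : ℂ) * Complex.I * (k : ℂ) / n) := by
  have hn : (n : ℂ) ≠ 0 := Nat.cast_ne_zero.2 (NeZero.ne n)
  rw [psiC, ZMod.val_natCast]
  have hk : (k : ℂ) = ((k % n : ℕ) : ℂ) + (n : ℂ) * ((k / n : ℕ) : ℂ) := by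
    exact_mod_cast congrArg (Nat.cast : ℕ → ℂ) (Nat.mod_add_div k n).symm
  have h2 : 2 * (Real.pi : ℂ) * Complex.I * (k : ℂ) / n
      = 2 * (Real.pi : ℂ) * Complex.I * ((k % n : ℕ) : ℂ) / n
        + ((k / n : ℕ) : ℤ) * (2 * (Real.pi : ℂ) * Complex.I) := by
    rw [hk, Int.cast_natCast]; field_simp
  rw [h2, Complex.exp_add, Complex.exp_int_mul_two_pi_mul_I, mul_one]

lemma psiC_add (n : ℕ) [NeZero n] (a b : ZMod n) :
    psiC n (a + b) = psiC n a * psiC n b := by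
  have : a + b = ((a.val + b.val : ℕ) : ZMod n) := by
    push_cast [ZMod.natCast_zmod_val]; rfl
  rw [this, psiC_natCast, psiC, psiC]
  rw [← Complex.exp_add]
  congr 1
  push_cast
  ring

lemma psiC_zero (n : ℕ) : psiC n 0 = 1 := by
  simp [psiC]

lemma psiC_ne_zero (n : ℕ) (a : ZMod n) : psiC n a ≠ 0 := Complex.exp_ne_zero _

lemma psiC_mul_neg (n : ℕ) [NeZero n] (a : ZMod n) : psiC n a * psiC n (-a) = 1 := by
  rw [← psiC_add, add_neg_cancel, psiC_zero]

lemma conj_psiC (n : ℕ) [NeZero n] (a : ZMod n) :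
    (starRingEnd ℂ) (psiC n a) = psiC n (-a) := by
  have habs : ‖psiC n a‖ = 1 := by
    have : 2 * (Real.pi : ℂ) * Complex.I * ((a.val : ℕ) : ℂ) / n
        = ((2 * Real.pi * a.val / n : ℝ) : ℂ) * Complex.I := by
      push_cast; ring
    rw [psiC, this, Complex.norm_exp_ofReal_mul_I]
  have h2 : psiC n a * (starRingEnd ℂ) (psiC n a) = 1 := by
    rw [Complex.mul_conj, ← Complex.sq_norm, habs]; norm_num
  exact mul_left_cancel₀ (psiC_ne_zero n a) (h2.trans (psiC_mul_neg n a).symm)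

noncomputable def PsiC (n d : ℕ) (v s : Fin d → ZMod n) : ℂ :=
  psiC n (∑ j, v j * s j)

lemma PsiC_eq_exp (n d : ℕ) [NeZero n] (v s : Fin d → ZMod n) :
    Complex.exp (2 * (Real.pi : ℂ) * Complex.I *
        (∑ j : Fin d, (((v j).val : ℂ) * ((s j).val : ℂ))) / (n : ℂ))
      = PsiC n d v s := by
  have h1 : (∑ j : Fin d, (((v j).val : ℂ) * ((s j).val : ℂ)))
      = (((∑ j : Fin d, (v j).val * (s j).val : ℕ)) : ℂ) := by push_cast; ring
  have h2 : ((∑ j : Fin d, (v j).val * (s j).val : ℕ) : ZMod n) = ∑ j, v j * s j := by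
    push_cast [ZMod.natCast_zmod_val]; rfl
  rw [h1, PsiC, ← h2, psiC_natCast]

lemma PsiC_add_left (n d : ℕ) [NeZero n] (u v s : Fin d → ZMod n) :
    PsiC n d (u + v) s = PsiC n d u s * PsiC n d v s := by
  rw [PsiC, PsiC, PsiC, ← psiC_add]
  congr 1
  rw [← Finset.sum_add_distrib]
  exact Finset.sum_congr rfl fun j _ => by simp [add_mul]

lemma conj_PsiC (n d : ℕ) [NeZero n] (v s : Fin d → ZMod n) :
    (starRingEnd ℂ) (PsiC n d v s) = PsiC n d (-v) s := by
  rw [PsiC, PsiC, conj_psiC]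
  congr 1
  rw [← Finset.sum_neg_distrib]
  exact Finset.sum_congr rfl fun j _ => by simp

lemma PsiC_sub_left (n d : ℕ) [NeZero n] (u v s : Fin d → ZMod n) :
    PsiC n d (u - v) s = PsiC n d u s * (starRingEnd ℂ) (PsiC n d v s) := by
  rw [conj_PsiC, sub_eq_add_neg, PsiC_add_left]

lemma PsiC_mul_conj_self (n d : ℕ) [NeZero n] (v s : Fin d → ZMod n) :
    PsiC n d v s * (starRingEnd ℂ) (PsiC n d v s) = 1 := by
  rw [conj_PsiC, ← PsiC_add_left, add_neg_cancel]
  simp [PsiC, psiC_zero]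

lemma col_orth (n d r : ℕ) [NeZero n] (hr : 0 < r)
    (S Q : Finset (Fin d → ZMod n)) (hS : S.card = r) (hQ : Q.card = r)
    (hrow : ∀ q ∈ Q, ∀ q' ∈ Q, ∑ s ∈ S, PsiC n d q s * (starRingEnd ℂ) (PsiC n d q' s)
      = if q = q' then (r : ℂ) else 0) :
    ∀ s ∈ S, ∀ s' ∈ S, ∑ q ∈ Q, (starRingEnd ℂ) (PsiC n d q s) * PsiC n d q s'
      = if s = s' then (r : ℂ) else 0 := by
  classical
  have hcard : Fintype.card ↥S = Fintype.card ↥Q := by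
    simp [Fintype.card_coe, hS, hQ]
  let e : ↥S ≃ ↥Q := Fintype.equivOfCardEq hcard
  let N : Matrix ↥Q ↥Q ℂ := fun q a => PsiC n d (q : Fin d → ZMod n) ((e.symm a : ↥S) : Fin d → ZMod n)
  have hNNH : N * N.conjTranspose = (r : ℂ) • (1 : Matrix ↥Q ↥Q ℂ) := by
    ext q q'
    rw [Matrix.mul_apply]
    simp only [Matrix.conjTranspose_apply, Matrix.smul_apply, Matrix.one_apply, Complex.star_def, smul_eq_mul]
    simp only [N]
    rw [← Equiv.sum_comp e (fun a => PsiC n d (q : Fin d → ZMod n) ((e.symm a : ↥S) : Fin d → ZMod n) *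
      (starRingEnd ℂ) (PsiC n d (q' : Fin d → ZMod n) ((e.symm a : ↥S) : Fin d → ZMod n)))]
    simp only [Equiv.symm_apply_apply]
    rw [Finset.sum_coe_sort S (fun y => PsiC n d (q : Fin d → ZMod n) y *
      (starRingEnd ℂ) (PsiC n d (q' : Fin d → ZMod n) y))]
    rw [hrow q q.2 q' q'.2]
    by_cases h : (q : Fin d → ZMod n) = (q' : Fin d → ZMod n)
    · have : q = q' := Subtype.ext h
      simp [h, this]
    · have : q ≠ q' := fun hc => h (congrArg _ hc)
      simp [h, this]
  have hrne : (r : ℂ) ≠ 0 := Nat.cast_ne_zero.2 hr.ne'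
  have hone : N * ((r : ℂ)⁻¹ • N.conjTranspose) = 1 := by
    rw [Matrix.mul_smul, hNNH, smul_smul, inv_mul_cancel₀ hrne, one_smul]
  have hcomm : ((r : ℂ)⁻¹ • N.conjTranspose) * N = 1 := mul_eq_one_comm.mp hone
  have hNHN : N.conjTranspose * N = (r : ℂ) • (1 : Matrix ↥Q ↥Q ℂ) := by
    have := congrArg (fun M => (r : ℂ) • M) hcomm
    simpa [Matrix.smul_mul, smul_smul, mul_inv_cancel₀ hrne] using this
  intro s hs s' hs'
  have key := congrFun (congrFun hNHN (e ⟨s, hs⟩)) (e ⟨s', hs'⟩)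
  rw [Matrix.mul_apply] at key
  simp only [Matrix.conjTranspose_apply, Matrix.smul_apply,
    Matrix.one_apply, Complex.star_def, smul_eq_mul] at key
  simp only [N, Equiv.symm_apply_apply] at key
  rw [← Finset.sum_coe_sort Q]
  rw [key]
  by_cases h : s = s'
  · have : e ⟨s, hs⟩ = e ⟨s', hs'⟩ := by congr 1; exact Subtype.ext h
    simp [h, this]
  · have : e ⟨s, hs⟩ ≠ e ⟨s', hs'⟩ := by
      intro hc
      exact h (Subtype.mk_eq_mk.mp (e.injective hc))
    simp [h, this]

theorem stmt_16 (n d r : ℕ) (hn : 1 ≤ n) (hd : 1 ≤ d)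
    (S Q : Finset (Fin d → ZMod n)) (hS : S.card = r) (hQ : Q.card = r)
    (hspec : ∀ q ∈ Q, ∀ q' ∈ Q, q ≠ q' →
      ∑ s ∈ S, Complex.exp (2 * (Real.pi : ℂ) * Complex.I *
        (∑ j : Fin d, (((q j - q' j).val : ℂ) * ((s j).val : ℂ))) / (n : ℂ)) = 0) :
    ∀ x : Fin d → ZMod n,
      ∑ q ∈ Q, (‖∑ s ∈ S, Complex.exp (2 * (Real.pi : ℂ) * Complex.I *
        (∑ j : Fin d, (((x j - q j).val : ℂ) * ((s j).val : ℂ))) / (n : ℂ))‖) ^ 2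
        = (r : ℝ) ^ 2 := by
  haveI : NeZero n := ⟨by omega⟩
  classical
  intro x
  rcases Nat.eq_zero_or_pos r with hr | hr
  · subst hr
    rw [Finset.card_eq_zero] at hQ
    subst hQ
    simp
  have hrow : ∀ q ∈ Q, ∀ q' ∈ Q,
      ∑ s ∈ S, PsiC n d q s * (starRingEnd ℂ) (PsiC n d q' s)
        = if q = q' then (r : ℂ) else 0 := by
    intro q hq q' hq'
    by_cases h : q = q'
    · subst h
      rw [if_pos rfl, Finset.sum_congr rfl fun s _ => PsiC_mul_conj_self n d q s]
      simp [hS]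
    · rw [if_neg h]
      have h0 := hspec q hq q' hq' h
      calc ∑ s ∈ S, PsiC n d q s * (starRingEnd ℂ) (PsiC n d q' s)
          = ∑ s ∈ S, PsiC n d (q - q') s :=
            Finset.sum_congr rfl fun s _ => (PsiC_sub_left n d q q' s).symm
        _ = 0 := by
            rw [← h0]
            exact Finset.sum_congr rfl fun s _ => (PsiC_eq_exp n d (q - q') s).symm
  have hcol := col_orth n d r hr S Q hS hQ hrow
  have hF : ∀ q : Fin d → ZMod n,
      (∑ s ∈ S, Complex.exp (2 * (Real.pi : ℂ) * Complex.I *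
        (∑ j : Fin d, (((x j - q j).val : ℂ) * ((s j).val : ℂ))) / (n : ℂ)))
      = ∑ s ∈ S, PsiC n d (x - q) s :=
    fun q => Finset.sum_congr rfl fun s _ => PsiC_eq_exp n d (x - q) s
  rw [← Complex.ofReal_inj]
  push_cast
  calc ∑ q ∈ Q, ((‖∑ s ∈ S, Complex.exp (2 * (Real.pi : ℂ) * Complex.I *
        (∑ j : Fin d, (((x j - q j).val : ℂ) * ((s j).val : ℂ))) / (n : ℂ))‖ : ℝ) : ℂ) ^ 2
      = ∑ q ∈ Q, (∑ s ∈ S, PsiC n d (x - q) s) *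
          (starRingEnd ℂ) (∑ s ∈ S, PsiC n d (x - q) s) := by
        refine Finset.sum_congr rfl fun q _ => ?_
        rw [hF q, ← Complex.ofReal_pow, Complex.sq_norm, Complex.mul_conj]
    _ = ∑ q ∈ Q, ∑ s ∈ S, ∑ s' ∈ S,
          (PsiC n d x s * (starRingEnd ℂ) (PsiC n d x s')) *
            ((starRingEnd ℂ) (PsiC n d q s) * PsiC n d q s') := by
        refine Finset.sum_congr rfl fun q _ => ?_
        rw [map_sum, Finset.sum_mul_sum]
        refine Finset.sum_congr rfl fun s _ => Finset.sum_congr rfl fun s' _ => ?_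
        simp only [PsiC_sub_left, map_mul, Complex.conj_conj]
        ring
    _ = ∑ s ∈ S, ∑ s' ∈ S,
          (PsiC n d x s * (starRingEnd ℂ) (PsiC n d x s')) *
            ∑ q ∈ Q, ((starRingEnd ℂ) (PsiC n d q s) * PsiC n d q s') := by
        rw [Finset.sum_comm]
        refine Finset.sum_congr rfl fun s _ => ?_
        rw [Finset.sum_comm]
        refine Finset.sum_congr rfl fun s' _ => ?_
        rw [Finset.mul_sum]
    _ = ∑ s ∈ S, (PsiC n d x s * (starRingEnd ℂ) (PsiC n d x s)) * r := by
        refine Finset.sum_congr rfl fun s hs => ?_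
        rw [Finset.sum_congr rfl fun s' hs' => by rw [hcol s hs s' hs']]
        rw [Finset.sum_congr rfl fun s' _ => (mul_ite _ _ _ _ : _ = _)]
        simp [Finset.sum_ite_eq, hs]
    _ = (r : ℂ) ^ 2 := by
        rw [Finset.sum_congr rfl fun s _ => by rw [PsiC_mul_conj_self, one_mul]]
        simp [hS, sq]
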